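/- Let A = {a,b,c}, R = {ac → ca, bc → cb, cab → cbb}, and R' = {c u a b → c u b b : u ∈ {a,b}*}. A word w over A is irreducible with respect to the rewriting system (A, R ∪ R') if and only if w ∈ {a,b}* ∪ {cⁱ bʲ aᵏ : i ≥ 1, j,k ≥ 0}, i.e., w either contains no letter c, or w consists of a nonempty block of c's followed by a (possibly empty) block of b's followed by a (possibly empty) block of a's. -/

import Mathlib

/-- The three-letter alphabet `{a, b, c}`. -/
inductive ABC : Type
  | a : ABC
  | b : ABC
  | c : ABC

open ABC

/-- Single-step reduction of a string rewriting system `R`: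
`u →_R v` iff `u = xℓy` and `v = xry` for some rule `(ℓ, r) ∈ R`. -/
def Step {α : Type*} (R : Set (List α × List α)) (u v : List α) : Prop :=
  ∃ x y l r, (l, r) ∈ R ∧ u = x ++ l ++ y ∧ v = x ++ r ++ y

/-- The rules `ac → ca`, `bc → cb`, `cab → cbb` of Example 3.4. -/
def Rp : Set (List ABC × List ABC) :=
  {([a,c], [c,a]), ([b,c], [c,b]), ([c,a,b], [c,b,b])}

/-- The extra rules `cuab → cubb` for `u ∈ {a,b}*`. -/
def Rp' : Set (List ABC × List ABC) :=
  {p | ∃ u : List ABC, c ∉ u ∧ p = (c :: u ++ [a, b], c :: u ++ [b, b])}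

/-- rank of letters: c < b < a -/
def rnk : ABC → ℕ
  | .c => 0
  | .b => 1
  | .a => 2

lemma head_rank (j k : ℕ) :
    ∀ y ∈ (List.replicate j b ++ List.replicate k a).head?, 1 ≤ rnk y := by
  cases j with
  | zero =>
    cases k with
    | zero => simp
    | succ k => simp [List.replicate_succ, rnk]
  | succ j => simp [List.replicate_succ, rnk]

lemma sorted_form (i j k : ℕ) :
    List.Chain' (fun x y => rnk x ≤ rnk y)
      (List.replicate i c ++ List.replicate j b ++ List.replicate k a) := by
  induction i with
  | zero =>
    simp only [List.replicate, List.nil_append]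
    induction j with
    | zero =>
      simp only [List.replicate, List.nil_append]
      induction k with
      | zero => simp [List.Chain']
      | succ k ihk =>
        rw [List.replicate_succ, List.Chain', List.isChain_cons]
        refine ⟨?_, ihk⟩
        intro y hy
        cases k with
        | zero => simp at hy
        | succ k =>
          rw [List.replicate_succ] at hy
          simp at hy
          subst hy
          simp [rnk]
    | succ j ihj =>
      rw [List.replicate_succ, List.cons_append, List.Chain', List.isChain_cons]
      exact ⟨head_rank j k, ihj⟩
  | succ i ihi =>
    rw [List.replicate_succ, List.cons_append, List.cons_append, List.Chain', List.isChain_cons]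
    refine ⟨fun y _ => by simp [rnk], ihi⟩

lemma no_step_tail {R : Set (List ABC × List ABC)} {d : ABC} {w : List ABC}
    (h : ¬ ∃ v, Step R (d :: w) v) : ¬ ∃ v, Step R w v := by
  rintro ⟨v, x, y, l, r, hm, hu, hv⟩
  exact h ⟨d :: (x ++ r ++ y), d :: x, y, l, r, hm, by simp [hu], rfl⟩

/-- Decompose an irreducible word containing `c` into a `c`-block and a `c`-free tail. -/
lemma decomp_c {w : List ABC} (hw : ¬ ∃ v, Step (Rp ∪ Rp') w v) (hc : c ∈ w) :
    ∃ i t, 1 ≤ i ∧ c ∉ t ∧ w = List.replicate i c ++ t := by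
  induction w with
  | nil => cases hc
  | cons d w ih =>
    by_cases hcw : c ∈ w
    · obtain ⟨i, t, hi, hct, hw'⟩ := ih (no_step_tail hw) hcw
      obtain ⟨i', rfl⟩ : ∃ i', i = i' + 1 := ⟨i - 1, by omega⟩
      cases d with
      | c =>
        exact ⟨i' + 2, t, by omega, hct, by simp [hw', List.replicate_succ]⟩
      | a =>
        exfalso
        apply hw
        refine ⟨c :: a :: (List.replicate i' c ++ t), [], List.replicate i' c ++ t,
          [a, c], [c, a], Or.inl (by simp [Rp]), ?_, rfl⟩
        simp [hw', List.replicate_succ]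
      | b =>
        exfalso
        apply hw
        refine ⟨c :: b :: (List.replicate i' c ++ t), [], List.replicate i' c ++ t,
          [b, c], [c, b], Or.inl (by simp [Rp]), ?_, rfl⟩
        simp [hw', List.replicate_succ]
    · cases d with
      | c => exact ⟨1, w, le_refl 1, hcw, by simp [List.replicate]⟩
      | a => simp at hc; tauto
      | b => simp at hc; tauto

/-- A `c`-free word with no `ab` factor is of the form `bʲaᵏ`. -/
lemma no_ab {t : List ABC} (hct : c ∉ t) (hab : ∀ x y, t ≠ x ++ [a, b] ++ y) :
    ∃ j k, t = List.replicate j b ++ List.replicate k a := by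
  induction t with
  | nil => exact ⟨0, 0, rfl⟩
  | cons d t ih =>
    have hct' : c ∉ t := fun h => hct (List.mem_cons_of_mem _ h)
    have hab' : ∀ x y, t ≠ x ++ [a, b] ++ y := by
      intro x y h
      exact hab (d :: x) y (by simp [h])
    obtain ⟨j, k, rfl⟩ := ih hct' hab'
    cases d with
    | c => simp at hct
    | b => exact ⟨j + 1, k, by simp [List.replicate_succ]⟩
    | a =>
      cases j with
      | zero => exact ⟨0, k + 1, by simp [List.replicate_succ]⟩
      | succ j =>
        exfalso
        exact hab [] (List.replicate j b ++ List.replicate k a)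
          (by simp [List.replicate_succ])

/-- A word over `{a,b,c}` is irreducible with respect to `R ∪ R'` if and only if
it lies in `{a,b}* ∪ {cⁱbʲaᵏ : i ≥ 1, j,k ≥ 0}`. -/
theorem stmt_9 :
    ∀ w : List ABC,
      (¬ ∃ v : List ABC, Step (Rp ∪ Rp') w v) ↔
        (c ∉ w ∨ ∃ i j k : ℕ, 1 ≤ i ∧
          w = List.replicate i c ++ List.replicate j b ++ List.replicate k a) := by
  intro w
  constructor
  · intro hw
    by_cases hc : c ∈ w
    · right
      obtain ⟨i, t, hi, hct, rfl⟩ := decomp_c hw hc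
      obtain ⟨i', rfl⟩ : ∃ i', i = i' + 1 := ⟨i - 1, by omega⟩
      have hab : ∀ x y, t ≠ x ++ [a, b] ++ y := by
        intro x y hxy
        apply hw
        have hcx : c ∉ x := fun h => hct (by simp [hxy, h])
        refine ⟨List.replicate i' c ++ (c :: x ++ [b, b]) ++ y,
          List.replicate i' c, y, c :: x ++ [a, b], c :: x ++ [b, b],
          Or.inr ⟨x, hcx, rfl⟩, ?_, rfl⟩
        rw [List.replicate_succ', hxy]
        simp
      obtain ⟨j, k, rfl⟩ := no_ab hct hab
      exact ⟨i' + 1, j, k, by omega, by simp⟩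
    · exact Or.inl hc
  · rintro h ⟨v, x, y, l, r, hm, rfl, -⟩
    have hinf : l <:+: x ++ l ++ y := ⟨x, y, rfl⟩
    rcases hm with hm | ⟨u, -, hu⟩
    · simp only [Rp, Set.mem_insert_iff, Set.mem_singleton_iff] at hm
      -- extract the left-hand sides
      rcases hm with hm | hm | hm <;>
      · have hl := congrArg Prod.fst hm
        simp only at hl
        subst hl
        rcases h with hc | ⟨i, j, k, hi, hw⟩
        · exact hc (by simp)
        · have hsorted := sorted_form i j k
          rw [← hw] at hsorted
          have := hsorted.infix hinf
          simp [List.Chain', List.isChain_pair, List.isChain_cons_cons, rnk] at this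
    · have hl := congrArg Prod.fst hu
      simp only at hl
      subst hl
      rcases h with hc | ⟨i, j, k, hi, hw⟩
      · exact hc (by simp)
      · have hsorted := sorted_form i j k
        rw [← hw] at hsorted
        have hab := List.IsInfix.trans
          (⟨c :: u, [], by simp⟩ : [a, b] <:+: c :: u ++ [a, b]) hinf
        have := hsorted.infix hab
        simp [List.Chain', List.isChain_pair, rnk] at this
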